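/- Let $U_1: \mathbb{R} \to \mathbb{R}$ be increasing and $U_2: \mathbb{R} \to \mathbb{R}$ be decreasing, both continuously differentiable, with $U = U_1 + U_2$ and $\int_{\mathbb{R}} e^{-U(x)}\,dx < \infty$. Define the kernel density $K(x,y) = \mathbb{1}_{\{y>x\}} U_1'(2y-x)e^{-U_1(2y-x)+U_1(x)} + \mathbb{1}_{\{y<x\}}(-U_2'(2y-x))e^{-U_2(2y-x)+U_2(x)}$. Then $\pi(x) \propto e^{-U(x)}$ satisfies $\pi(y) = \int_{-\infty}^{\infty} K(x,y)\pi(x)\,dx$ for all $y$ (assuming the differentiation under the integral sign is valid and boundary terms vanish at $\pm\infty$). -/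

import Mathlib

open MeasureTheory Filter

/-- Theorem 4.1: stationarity of the target density for the decomposition-based sampler. -/
theorem decomposition_sampler_stationarity
    (U₁ U₂ : ℝ → ℝ) (hU₁mono : Monotone U₁) (hU₂anti : Antitone U₂)
    (hU₁ : ContDiff ℝ 1 U₁) (hU₂ : ContDiff ℝ 1 U₂)
    (hint : Integrable (fun x => Real.exp (-(U₁ x + U₂ x))))
    (K : ℝ → ℝ → ℝ)
    (hK : ∀ x y, K x y =
      (if x < y then deriv U₁ (2 * y - x) * Real.exp (-U₁ (2 * y - x) + U₁ x) else 0)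
      + (if y < x then -deriv U₂ (2 * y - x) * Real.exp (-U₂ (2 * y - x) + U₂ x) else 0))
    (hKint : ∀ y, Integrable (fun x => K x y * Real.exp (-(U₁ x + U₂ x))))
    (hbdry : ∀ y : ℝ,
      Tendsto (fun u => Real.exp (-U₁ (2 * y - u) - U₂ u) *
        (deriv U₁ (2 * y - u) + deriv U₂ u)) atBot (nhds 0)) :
    ∀ y : ℝ, Real.exp (-(U₁ y + U₂ y)) = ∫ x : ℝ, K x y * Real.exp (-(U₁ x + U₂ x)) := by
  intro y
  have hU₁d : Differentiable ℝ U₁ := hU₁.differentiable one_ne_zero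
  have hU₂d : Differentiable ℝ U₂ := hU₂.differentiable one_ne_zero
  set f : ℝ → ℝ := fun x => K x y * Real.exp (-(U₁ x + U₂ x)) with hf
  set g : ℝ → ℝ := fun u => Real.exp (-U₁ (2 * y - u) - U₂ u) with hg
  set g' : ℝ → ℝ := fun u => (deriv U₁ (2 * y - u) - deriv U₂ u) * g u with hg'
  -- derivative of g
  have hgderiv : ∀ u : ℝ, HasDerivAt g (g' u) u := by
    intro u
    have h1 : HasDerivAt (fun x : ℝ => 2 * y - x) (-1) u := by
      simpa using (hasDerivAt_id u).const_sub (2 * y)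
    have h2 : HasDerivAt (fun x : ℝ => U₁ (2 * y - x)) (deriv U₁ (2 * y - u) * (-1)) u :=
      (hU₁d (2 * y - u)).hasDerivAt.comp u h1
    have h3 : HasDerivAt (fun x : ℝ => -U₁ (2 * y - x) - U₂ x)
        (deriv U₁ (2 * y - u) - deriv U₂ u) u := by
      have := (h2.neg).sub (hU₂d u).hasDerivAt
      exact this.congr_deriv (by ring)
    simpa [hg, hg', mul_comm] using h3.exp
  -- g is monotone
  have hgmono : Monotone g := by
    intro u v huv
    apply Real.exp_le_exp.2
    have h1 : U₁ (2 * y - v) ≤ U₁ (2 * y - u) := hU₁mono (by linarith)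
    have h2 : U₂ v ≤ U₂ u := hU₂anti huv
    linarith
  -- limit of g at -∞ is the infimum
  have hbdd : BddBelow (Set.range g) := ⟨0, fun x hx => by
    obtain ⟨u, rfl⟩ := hx; exact (Real.exp_pos _).le⟩
  set L : ℝ := ⨅ u, g u with hL
  have hgtend : Tendsto g atBot (nhds L) := tendsto_atBot_ciInf hgmono hbdd
  have hLnonneg : 0 ≤ L := le_ciInf fun u => (Real.exp_pos _).le
  -- the infimum is 0
  have hL0 : L = 0 := by
    by_contra h
    have hLpos : 0 < L := lt_of_le_of_ne hLnonneg (Ne.symm h)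
    have hsub : Set.Iic y ⊆ {x | L ≤ Real.exp (-(U₁ x + U₂ x))} := by
      intro u hu
      have h1 : U₁ u ≤ U₁ (2 * y - u) := hU₁mono (by simp at hu; linarith)
      have h2 : g u ≤ Real.exp (-(U₁ u + U₂ u)) := Real.exp_le_exp.2 (by linarith)
      exact le_trans (ciInf_le hbdd u) h2
    have hlt := hint.measure_ge_lt_top hLpos
    have : (volume : Measure ℝ) (Set.Iic y) < ⊤ :=
      lt_of_le_of_lt (measure_mono hsub) hlt
    simp [Real.volume_Iic] at this
  -- the value g y
  have hgy : g y = Real.exp (-(U₁ y + U₂ y)) := by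
    simp only [hg]
    rw [show 2 * y - y = y by ring]
    congr 1
    ring
  -- pieces of the integrand
  set A : ℝ → ℝ := fun u => deriv U₁ (2 * y - u) * g u with hA
  set B : ℝ → ℝ := fun x => -deriv U₂ (2 * y - x) * Real.exp (-U₂ (2 * y - x) - U₁ x) with hB
  have hfA : ∀ x ∈ Set.Iio y, f x = A x := by
    intro x hx
    have hx' : x < y := hx
    simp only [hf, hA, hg, hK, if_pos hx', if_neg (not_lt.2 hx'.le), add_zero,
      ← Real.exp_add, mul_assoc]
    congr 2
    ring
  have hfB : ∀ x ∈ Set.Ioi y, f x = B x := by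
    intro x hx
    have hx' : y < x := hx
    simp only [hf, hB, hK, if_pos hx', if_neg (not_lt.2 hx'.le), zero_add,
      ← Real.exp_add, mul_assoc]
    congr 2
    ring
  -- integrability of the pieces
  have hfint := hKint y
  have hAint : IntegrableOn A (Set.Iio y) := by
    exact (hfint.integrableOn.congr_fun hfA measurableSet_Iio : _)
  have hBint : IntegrableOn B (Set.Ioi y) :=
    (hfint.integrableOn.congr_fun hfB measurableSet_Ioi : _)
  -- change of variables x ↦ 2y - x
  have hmp : MeasurePreserving (fun u : ℝ => 2 * y - u) volume volume :=
    Measure.measurePreserving_sub_left volume (2 * y)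
  have hemb : MeasurableEmbedding (fun u : ℝ => 2 * y - u) := by
    have := (MeasurableEquiv.subLeft (2 * y) : ℝ ≃ᵐ ℝ).measurableEmbedding
    convert this using 1
    rfl
  have hpre : (fun u : ℝ => 2 * y - u) ⁻¹' (Set.Ioi y) = Set.Iio y := by
    ext u
    simp only [Set.mem_preimage, Set.mem_Ioi, Set.mem_Iio]
    constructor <;> intro h <;> linarith
  set C : ℝ → ℝ := fun u => -deriv U₂ u * g u with hC
  have hBC : ∀ u : ℝ, B (2 * y - u) = C u := by
    intro u
    simp only [hB, hC, hg]
    have h1 : 2 * y - (2 * y - u) = u := by ring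
    rw [h1]
    ring_nf
  have hCint : IntegrableOn C (Set.Iio y) := by
    have := (hmp.integrableOn_comp_preimage hemb (f := B) (s := Set.Ioi y)).2 hBint
    rw [hpre] at this
    exact this.congr_fun (fun u _ => hBC u) measurableSet_Iio
  have hCB : ∫ u in Set.Iio y, C u = ∫ x in Set.Ioi y, B x := by
    have := hmp.setIntegral_preimage_emb hemb B (Set.Ioi y)
    rw [hpre] at this
    rw [← this]
    exact setIntegral_congr_fun measurableSet_Iio fun u _ => (hBC u).symm
  -- g' = A + C
  have hg'AC : ∀ u : ℝ, g' u = A u + C u := by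
    intro u; simp only [hg', hA, hC]; ring
  have hg'int : IntegrableOn g' (Set.Iic y) := by
    have h0 : IntegrableOn (fun u => A u + C u) (Set.Iio y) := hAint.add hCint
    have h := h0.congr_fun
      (fun u (_ : u ∈ Set.Iio y) => (hg'AC u).symm) measurableSet_Iio
    rwa [IntegrableOn, ← restrict_Iio_eq_restrict_Iic]
  -- FTC on (-∞, y]
  have hFTC : ∫ u in Set.Iic y, g' u = g y - L :=
    integral_Iic_of_hasDerivAt_of_tendsto' (fun u _ => hgderiv u) hg'int hgtend
  -- assemble
  have hsplit : (∫ x in Set.Iio y, f x) + ∫ x in Set.Ici y, f x = ∫ x, f x :=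
    intervalIntegral.integral_Iio_add_Ici
      (hfint.integrableOn) (hfint.integrableOn)
  have h1 : ∫ x in Set.Iio y, f x = ∫ u in Set.Iio y, A u :=
    setIntegral_congr_fun measurableSet_Iio hfA
  have h2 : ∫ x in Set.Ici y, f x = ∫ u in Set.Iio y, C u := by
    rw [MeasureTheory.integral_Ici_eq_integral_Ioi, hCB]
    exact (setIntegral_congr_fun measurableSet_Ioi hfB).symm ▸ rfl
  have h3 : (∫ u in Set.Iio y, A u) + ∫ u in Set.Iio y, C u = ∫ u in Set.Iic y, g' u := by
    rw [← integral_add hAint hCint, MeasureTheory.integral_Iic_eq_integral_Iio]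
    exact setIntegral_congr_fun measurableSet_Iio fun u _ => (hg'AC u).symm
  calc Real.exp (-(U₁ y + U₂ y)) = g y - L := by rw [hL0, hgy, sub_zero]
    _ = ∫ u in Set.Iic y, g' u := hFTC.symm
    _ = (∫ u in Set.Iio y, A u) + ∫ u in Set.Iio y, C u := h3.symm
    _ = (∫ x in Set.Iio y, f x) + ∫ x in Set.Ici y, f x := by rw [h1, h2]
    _ = ∫ x, f x := hsplit
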